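/- Consider the categorical weighted k-means instance (I, v) with v₁ ≥ v₂ ≥ ⋯ ≥ v_L > 0 and 2 ≤ k ≤ L. Let C* = {1₁, …, 1_{k−1}, μ} ⊂ ℝ^L, where μ is the weighted centroid of the remaining indicator vectors, i.e. μ_i = v_i / (Σ_{j=k}^L v_j) for i ≥ k and μ_i = 0 for i ≤ k−1. Then C* is an optimal solution: Σ_{i=1}^L v_i · min_{c∈C*} ‖1_i − c‖² = OPT_k(I, v), where OPT_k(I,v) is the minimum over nonempty sets C ⊂ ℝ^L with |C| ≤ k of Σ_{i=1}^L v_i · min_{c∈C} ‖1_i − c‖². -/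

import Mathlib

open Finset

noncomputable section

/-- The categorical weighted k-means cost of a finite centroid set `C ⊆ ℝ^L` on the
instance `(I, v)` of one-hot indicator vectors with weights `v`:
`∑_i v_i · min_{c∈C} ‖1_i − c‖²`. -/
def catCost (L : ℕ) (v : Fin L → ℝ) (C : Finset (EuclideanSpace ℝ (Fin L))) : ℝ :=
  ∑ i, v i * (sInf ((fun x => ‖EuclideanSpace.single i (1 : ℝ) - x‖) ''
    (C : Set (EuclideanSpace ℝ (Fin L))))) ^ 2

/-- The weighted centroid of the "light" indicator vectors `1_k, …, 1_L` (0-indexed: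
indices `i` with `k − 1 ≤ i`): coordinate `v_i / ∑_{j≥k} v_j` at such `i`, `0` elsewhere. -/
def lightCentroid (L k : ℕ) (v : Fin L → ℝ) : EuclideanSpace ℝ (Fin L) :=
  ∑ i ∈ univ.filter (fun i : Fin L => k - 1 ≤ (i : ℕ)),
    (v i / ∑ i' ∈ univ.filter (fun i' : Fin L => k - 1 ≤ (i' : ℕ)), v i') •
      EuclideanSpace.single i (1 : ℝ)

open Classical in
/-- The centroid set `C* = {1₁, …, 1_{k−1}, μ}`: the `k − 1` heaviest indicator vectors
together with the weighted centroid `μ` of the remaining ones. -/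
noncomputable def Cstar (L k : ℕ) (v : Fin L → ℝ) : Finset (EuclideanSpace ℝ (Fin L)) :=
  ((univ.filter (fun i : Fin L => (i : ℕ) < k - 1)).image
    (fun i => EuclideanSpace.single i (1 : ℝ))) ∪ {lightCentroid L k v}

variable {ι : Type*} [DecidableEq ι]

/-- optimal within-cluster cost -/
def fcost (v : ι → ℝ) (S : Finset ι) : ℝ :=
  (∑ i ∈ S, v i) - (∑ i ∈ S, v i ^ 2) / (∑ i ∈ S, v i)

lemma fcost_empty (v : ι → ℝ) : fcost v (∅ : Finset ι) = 0 := by simp [fcost]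

lemma sum_sq_le (v : ι → ℝ) (S : Finset ι) (hv : ∀ i ∈ S, 0 ≤ v i) :
    ∑ i ∈ S, v i ^ 2 ≤ (∑ i ∈ S, v i) ^ 2 :=
  Finset.sum_sq_le_sq_sum_of_nonneg hv

lemma fcost_nonneg (v : ι → ℝ) (S : Finset ι) (hv : ∀ i ∈ S, 0 < v i) : 0 ≤ fcost v S := by
  rcases S.eq_empty_or_nonempty with rfl | hS
  · simp [fcost]
  · have hV : 0 < ∑ i ∈ S, v i := Finset.sum_pos hv hS
    have h := sum_sq_le v S (fun i hi => (hv i hi).le)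
    have : (∑ i ∈ S, v i ^ 2) / (∑ i ∈ S, v i) ≤ ∑ i ∈ S, v i := by
      rw [div_le_iff₀ hV]; nlinarith
    simp only [fcost]; linarith

lemma fcost_mono (v : ι → ℝ) {t s : Finset ι} (hts : t ⊆ s) (hv : ∀ i ∈ s, 0 < v i) :
    fcost v t ≤ fcost v s := by
  rcases t.eq_empty_or_nonempty with rfl | ht
  · simpa [fcost] using fcost_nonneg v s hv
  classical
  have hVt : 0 < ∑ i ∈ t, v i := Finset.sum_pos (fun i hi => hv i (hts hi)) ht
  have hsplit : ∀ g : ι → ℝ, ∑ i ∈ s, g i = ∑ i ∈ t, g i + ∑ i ∈ s \ t, g i := by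
    intro g; rw [add_comm, Finset.sum_sdiff hts]
  set B := ∑ i ∈ s \ t, v i with hB
  set Ab := ∑ i ∈ s \ t, v i ^ 2 with hAb
  set Vt := ∑ i ∈ t, v i
  set At := ∑ i ∈ t, v i ^ 2
  have hBnn : 0 ≤ B := Finset.sum_nonneg fun i hi => (hv i (Finset.sdiff_subset hi)).le
  have hAbB : Ab ≤ B ^ 2 := sum_sq_le v _ (fun i hi => (hv i (Finset.sdiff_subset hi)).le)
  have hAbnn : 0 ≤ Ab := Finset.sum_nonneg fun i _ => sq_nonneg _
  have hAtnn : 0 ≤ At := Finset.sum_nonneg fun i _ => sq_nonneg _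
  have hAtV : At ≤ Vt ^ 2 := sum_sq_le v _ (fun i hi => (hv i (hts hi)).le)
  simp only [fcost, hsplit v, hsplit (fun i => v i ^ 2)]
  have key : (At + Ab) / (Vt + B) ≤ B + At / Vt := by
    rw [div_le_iff₀ (by linarith : (0:ℝ) < Vt + B)]
    have h2 : At / Vt * Vt = At := div_mul_cancel₀ _ hVt.ne'
    have h3 : 0 ≤ At / Vt := div_nonneg hAtnn hVt.le
    nlinarith [mul_nonneg hBnn hVt.le, mul_nonneg h3 hBnn]
  linarith

lemma alg_exchange (a V1 V2 A1 A2 : ℝ) (ha : 0 < a) (hV1 : 0 ≤ V1) (hV2 : 0 ≤ V2)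
    (hA1 : 0 ≤ A1) (hA2 : 0 ≤ A2) (hA1a : A1 ≤ a * V1) (hA2a : A2 ≤ a * V2)
    (hA2sq : A2 ≤ V2 ^ 2) :
    (a ^ 2 + A1) / (a + V1) + A2 / V2 ≤ a + (A1 + A2) / (V1 + V2) := by
  have haV1 : 0 < a + V1 := by linarith
  rcases eq_or_lt_of_le hV2 with h0 | hV2pos
  · -- V2 = 0, A2 = 0
    have hA20 : A2 = 0 := le_antisymm (by nlinarith) hA2
    subst hA20
    rw [← h0]
    rcases eq_or_lt_of_le hV1 with h1 | hV1pos
    · have hA10 : A1 = 0 := le_antisymm (by nlinarith) hA1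
      rw [← h1, hA10]
      simp [ha.ne', sq, mul_div_assoc, mul_div_cancel_left₀ _ ha.ne']
    · simp only [add_zero, zero_div]
      rw [div_le_iff₀ haV1]
      have hg : A1 / V1 * V1 = A1 := div_mul_cancel₀ _ hV1pos.ne'
      have hg0 : 0 ≤ A1 / V1 := div_nonneg hA1 hV1pos.le
      nlinarith [mul_nonneg hg0 ha.le]
  · have hV12 : 0 < V1 + V2 := by linarith
    have hrw : a + (A1 + A2) / (V1 + V2) = (a * (V1 + V2) + (A1 + A2)) / (V1 + V2) := by
      field_simp
    rw [div_add_div _ _ haV1.ne' hV2pos.ne', hrw, div_le_div_iff₀ (by positivity) (by positivity)]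
    rcases le_total a V2 with hc | hc
    · nlinarith [mul_nonneg (mul_nonneg hV2pos.le (sub_nonneg.2 hc)) (sub_nonneg.2 hA1a),
        mul_nonneg (sub_nonneg.2 hA2a) (add_nonneg (mul_nonneg ha.le hV1) (mul_nonneg hV1 hV1))]
    · nlinarith [mul_nonneg (mul_nonneg hV2pos.le (sub_nonneg.2 hc)) (add_nonneg (mul_nonneg hV1 hV1) hA1),
        mul_nonneg (sub_nonneg.2 hA2sq) (add_nonneg (mul_nonneg ha.le hV1) (mul_nonneg hV1 hV1))]


lemma fcost_exchange (v : ι → ℝ) {S T : Finset ι} (hd : Disjoint S T) {a : ι} (ha : a ∈ S)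
    (hv : ∀ i ∈ S ∪ T, 0 < v i) (hmax : ∀ i ∈ S ∪ T, v i ≤ v a) :
    fcost v ((S.erase a) ∪ T) ≤ fcost v S + fcost v T := by
  classical
  have hposS : ∀ i ∈ S, 0 < v i := fun i hi => hv i (mem_union_left _ hi)
  have hposT : ∀ i ∈ T, 0 < v i := fun i hi => hv i (mem_union_right _ hi)
  have hde : Disjoint (S.erase a) T := hd.mono_left (erase_subset _ _)
  have hsum : ∀ g : ι → ℝ, ∑ i ∈ (S.erase a) ∪ T, g i = ∑ i ∈ S.erase a, g i + ∑ i ∈ T, g i :=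
    fun g => Finset.sum_union hde
  have hS : ∀ g : ι → ℝ, ∑ i ∈ S, g i = g a + ∑ i ∈ S.erase a, g i :=
    fun g => (Finset.add_sum_erase S g ha).symm
  set V1 := ∑ i ∈ S.erase a, v i
  set A1 := ∑ i ∈ S.erase a, v i ^ 2
  set V2 := ∑ i ∈ T, v i
  set A2 := ∑ i ∈ T, v i ^ 2
  have hV1 : 0 ≤ V1 := Finset.sum_nonneg fun i hi => (hposS i (erase_subset _ _ hi)).le
  have hV2 : 0 ≤ V2 := Finset.sum_nonneg fun i hi => (hposT i hi).le
  have hA1 : 0 ≤ A1 := Finset.sum_nonneg fun i _ => sq_nonneg _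
  have hA2 : 0 ≤ A2 := Finset.sum_nonneg fun i _ => sq_nonneg _
  have hva : 0 < v a := hposS a ha
  have hA1a : A1 ≤ v a * V1 := by
    rw [Finset.mul_sum]
    refine Finset.sum_le_sum fun i hi => ?_
    have hiS := erase_subset _ _ hi
    have := hmax i (mem_union_left _ hiS)
    nlinarith [hposS i hiS]
  have hA2a : A2 ≤ v a * V2 := by
    rw [Finset.mul_sum]
    refine Finset.sum_le_sum fun i hi => ?_
    have := hmax i (mem_union_right _ hi)
    nlinarith [hposT i hi]
  have hA2sq : A2 ≤ V2 ^ 2 := sum_sq_le v T fun i hi => (hposT i hi).le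
  have halg := alg_exchange (v a) V1 V2 A1 A2 hva hV1 hV2 hA1 hA2 hA1a hA2a hA2sq
  simp only [fcost, hsum v, hsum (fun i => v i ^ 2), hS v, hS (fun i => v i ^ 2)]
  linarith

lemma key_partition {β : Type*} [DecidableEq β] (k : ℕ) (s t : Finset ι) (v : ι → ℝ)
    (J : Finset β) (σ : ι → β)
    (hv : ∀ i ∈ s, 0 < v i) (hts : t ⊆ s)
    (hcard : (s \ t).card + 1 = k)
    (hheavy : ∀ i ∈ s \ t, ∀ j ∈ t, v j ≤ v i)
    (hJ : J.card ≤ k) (hσ : ∀ i ∈ s, σ i ∈ J) :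
    fcost v t ≤ ∑ j ∈ J, fcost v (s.filter (fun i => σ i = j)) := by
  classical
  induction k generalizing s J σ with
  | zero => omega
  | succ k ih =>
    -- first handle small J
    rcases le_or_gt J.card 1 with hJ1 | hJ2
    · interval_cases h : J.card
      · -- J empty: s empty
        have hJe : J = ∅ := Finset.card_eq_zero.mp h
        subst hJe
        have hse : s = ∅ := by
          by_contra hne
          obtain ⟨i, hi⟩ := Finset.nonempty_iff_ne_empty.mpr hne
          exact absurd (hσ i hi) (by simp)
        subst hse
        have : t = ∅ := Finset.subset_empty.mp hts
        simp [this, fcost]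
      · obtain ⟨j, hj⟩ := Finset.card_eq_one.mp h
        subst hj
        have hfib : s.filter (fun i => σ i = j) = s := by
          apply Finset.filter_true_of_mem
          intro i hi
          have := hσ i hi
          simpa using this
        rw [Finset.sum_singleton, hfib]
        exact fcost_mono v hts hv
    · -- J has ≥ 2 elements
      have hst : (s \ t).Nonempty := by
        rw [← Finset.card_pos]; omega
      obtain ⟨a, hamem, hamax⟩ := Finset.exists_max_image (s \ t) v hst
      have haS : a ∈ s := (Finset.mem_sdiff.mp hamem).1
      have hat : a ∉ t := (Finset.mem_sdiff.mp hamem).2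
      set j₀ := σ a with hj₀
      have hj₀J : j₀ ∈ J := hσ a haS
      have : (J.erase j₀).Nonempty := by
        rw [← Finset.card_pos, Finset.card_erase_of_mem hj₀J]; omega
      obtain ⟨j₁, hj₁⟩ := this
      have hj₁J : j₁ ∈ J := Finset.mem_of_mem_erase hj₁
      have hj₁ne : j₁ ≠ j₀ := Finset.ne_of_mem_erase hj₁
      set σ' : ι → β := fun i => if σ i = j₀ then j₁ else σ i with hσ'
      -- max property of a over all of s
      have hmaxs : ∀ i ∈ s, v i ≤ v a := by
        intro i hi
        by_cases hit : i ∈ t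
        · exact hheavy a hamem i hit
        · exact hamax i (Finset.mem_sdiff.mpr ⟨hi, hit⟩)
      -- apply ih
      have hIH := ih (s.erase a) (J.erase j₀) σ'
        (fun i hi => hv i (Finset.erase_subset _ _ hi))
        (fun i hi => Finset.mem_erase.mpr ⟨fun h => hat (h ▸ hi), hts hi⟩)
        (by
          have : (s.erase a) \ t = (s \ t).erase a := by
            ext x; simp [Finset.mem_erase, Finset.mem_sdiff]; tauto
          rw [this, Finset.card_erase_of_mem hamem]; omega)
        (fun i hi j hj => hheavy i (by
          have : (s.erase a) \ t ⊆ s \ t :=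
            Finset.sdiff_subset_sdiff (Finset.erase_subset _ _) le_rfl
          exact this hi) j hj)
        (by rw [Finset.card_erase_of_mem hj₀J]; omega)
        (by
          intro i hi
          have his : i ∈ s := Finset.erase_subset _ _ hi
          by_cases hc : σ i = j₀
          · simp only [hσ', hc, if_pos]
            exact hj₁
          · simp only [hσ', if_neg hc]
            exact Finset.mem_erase.mpr ⟨hc, hσ i his⟩)
      refine hIH.trans ?_
      -- compare the sums
      have hsplitJ : ∑ j ∈ J, fcost v (s.filter (fun i => σ i = j))
          = fcost v (s.filter (fun i => σ i = j₀)) + fcost v (s.filter (fun i => σ i = j₁))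
            + ∑ j ∈ (J.erase j₀).erase j₁, fcost v (s.filter (fun i => σ i = j)) := by
        rw [← Finset.add_sum_erase _ _ hj₀J, ← Finset.add_sum_erase _ _ hj₁]
        ring
      have hsplitJ' : ∑ j ∈ J.erase j₀, fcost v ((s.erase a).filter (fun i => σ' i = j))
          = fcost v ((s.erase a).filter (fun i => σ' i = j₁))
            + ∑ j ∈ (J.erase j₀).erase j₁, fcost v ((s.erase a).filter (fun i => σ' i = j)) := by
        rw [← Finset.add_sum_erase _ _ hj₁]
      have hfib_eq : ∀ j ∈ (J.erase j₀).erase j₁,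
          (s.erase a).filter (fun i => σ' i = j) = s.filter (fun i => σ i = j) := by
        intro j hj
        have hjne0 : j ≠ j₀ := Finset.ne_of_mem_erase (Finset.mem_of_mem_erase hj)
        have hjne1 : j ≠ j₁ := Finset.ne_of_mem_erase hj
        ext x
        simp only [Finset.mem_filter, Finset.mem_erase, hσ']
        constructor
        · rintro ⟨⟨hxa, hxs⟩, hx⟩
          by_cases hc : σ x = j₀
          · rw [if_pos hc] at hx; exact absurd hx.symm hjne1
          · rw [if_neg hc] at hx; exact ⟨hxs, hx⟩
        · rintro ⟨hxs, hx⟩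
          have hc : σ x ≠ j₀ := by rw [hx]; exact hjne0
          have hxa : x ≠ a := fun h => hc (by rw [h])
          exact ⟨⟨hxa, hxs⟩, by rw [if_neg hc]; exact hx⟩
      have hfib1 : (s.erase a).filter (fun i => σ' i = j₁)
          = ((s.filter (fun i => σ i = j₀)).erase a) ∪ (s.filter (fun i => σ i = j₁)) := by
        ext x
        simp only [Finset.mem_filter, Finset.mem_erase, Finset.mem_union, hσ']
        constructor
        · rintro ⟨⟨hxa, hxs⟩, hx⟩
          by_cases hc : σ x = j₀
          · exact Or.inl ⟨hxa, hxs, hc⟩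
          · rw [if_neg hc] at hx; exact Or.inr ⟨hxs, hx⟩
        · rintro (⟨hxa, hxs, hc⟩ | ⟨hxs, hx⟩)
          · exact ⟨⟨hxa, hxs⟩, by rw [if_pos hc]⟩
          · have hc : σ x ≠ j₀ := by rw [hx]; exact hj₁ne
            exact ⟨⟨fun h => hc (by rw [h]), hxs⟩, by rw [if_neg hc]; exact hx⟩
      have hdisj : Disjoint (s.filter (fun i => σ i = j₀)) (s.filter (fun i => σ i = j₁)) := by
        rw [Finset.disjoint_left]
        intro x hx hx'
        exact hj₁ne (((Finset.mem_filter.mp hx).2.symm.trans (Finset.mem_filter.mp hx').2).symm)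
      have haf : a ∈ s.filter (fun i => σ i = j₀) := Finset.mem_filter.mpr ⟨haS, rfl⟩
      have hsub : (s.filter (fun i => σ i = j₀)) ∪ (s.filter (fun i => σ i = j₁)) ⊆ s := by
        intro x hx
        rcases Finset.mem_union.mp hx with h | h
        · exact Finset.filter_subset _ _ h
        · exact Finset.filter_subset _ _ h
      have hexch := fcost_exchange v hdisj haf (fun i hi => hv i (hsub hi))
        (fun i hi => hmaxs i (hsub hi))
      have hrest : ∑ j ∈ (J.erase j₀).erase j₁, fcost v ((s.erase a).filter (fun i => σ' i = j))
          = ∑ j ∈ (J.erase j₀).erase j₁, fcost v (s.filter (fun i => σ i = j)) :=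
        Finset.sum_congr rfl fun j hj => by rw [hfib_eq j hj]
      rw [hsplitJ, hsplitJ', hrest, hfib1]
      linarith
lemma cluster_lb {L : ℕ} (v : Fin L → ℝ) (hv : ∀ i, 0 < v i) (S : Finset (Fin L))
    (x : EuclideanSpace ℝ (Fin L)) :
    fcost v S ≤ ∑ i ∈ S, v i * ‖EuclideanSpace.single i (1:ℝ) - x‖ ^ 2 := by
  classical
  rcases S.eq_empty_or_nonempty with rfl | hS
  · simp [fcost]
  have hV : 0 < ∑ i ∈ S, v i := Finset.sum_pos (fun i _ => hv i) hS
  set V := ∑ i ∈ S, v i with hVdef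
  have hrw : ∀ i : Fin L, ‖EuclideanSpace.single i (1:ℝ) - x‖ ^ 2
      = ∑ t, ((if t = i then (1:ℝ) else 0) - x t) ^ 2 := by
    intro i
    rw [EuclideanSpace.norm_eq, Real.sq_sqrt (by positivity)]
    refine Finset.sum_congr rfl fun t _ => ?_
    rw [Real.norm_eq_abs, sq_abs]
    congr 1
    have : (EuclideanSpace.single i (1:ℝ) - x) t = EuclideanSpace.single i (1:ℝ) t - x t := rfl
    rw [this, EuclideanSpace.single_apply]
  set W : Fin L → ℝ := fun t => if t ∈ S then v t else 0 with hW
  have hW2 : ∀ t, (if t ∈ S then v t ^ 2 else 0) = W t ^ 2 := by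
    intro t; by_cases h : t ∈ S <;> simp [hW, h]
  have h1 : ∑ t : Fin L, W t = V := by
    simp [hW, Finset.sum_ite_mem, Finset.univ_inter, hVdef]
  have h2 : ∑ t : Fin L, W t ^ 2 = ∑ i ∈ S, v i ^ 2 := by
    rw [← Finset.sum_congr rfl (fun t _ => hW2 t)]
    simp [Finset.sum_ite_mem, Finset.univ_inter]
  have hfc : fcost v S = ∑ t : Fin L, (W t - W t ^ 2 / V) := by
    rw [Finset.sum_sub_distrib, h1, ← Finset.sum_div, h2, fcost]
  have hexp : ∀ t : Fin L, ∑ i ∈ S, v i * ((if t = i then (1:ℝ) else 0) - x t) ^ 2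
      = W t * (1 - 2 * x t) + V * x t ^ 2 := by
    intro t
    have hterm : ∀ i ∈ S, v i * ((if t = i then (1:ℝ) else 0) - x t) ^ 2
        = (if t = i then v i else 0) * (1 - 2 * x t) + v i * x t ^ 2 := by
      intro i _; by_cases h : t = i <;> simp [h] <;> ring
    rw [Finset.sum_congr rfl hterm, Finset.sum_add_distrib, ← Finset.sum_mul,
      Finset.sum_ite_eq, ← Finset.sum_mul]
  have hpt : ∀ t : Fin L, W t - W t ^ 2 / V ≤ W t * (1 - 2 * x t) + V * x t ^ 2 := by
    intro t
    have hdiv : 2 * W t * x t - V * x t ^ 2 ≤ W t ^ 2 / V := by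
      rw [le_div_iff₀ hV]
      nlinarith [sq_nonneg (V * x t - W t)]
    nlinarith
  calc fcost v S = ∑ t : Fin L, (W t - W t ^ 2 / V) := hfc
    _ ≤ ∑ t : Fin L, (W t * (1 - 2 * x t) + V * x t ^ 2) := Finset.sum_le_sum fun t _ => hpt t
    _ = ∑ t : Fin L, ∑ i ∈ S, v i * ((if t = i then (1:ℝ) else 0) - x t) ^ 2 :=
        (Finset.sum_congr rfl fun t _ => (hexp t).symm)
    _ = ∑ i ∈ S, ∑ t : Fin L, v i * ((if t = i then (1:ℝ) else 0) - x t) ^ 2 := Finset.sum_comm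
    _ = ∑ i ∈ S, v i * ‖EuclideanSpace.single i (1:ℝ) - x‖ ^ 2 := by
        refine Finset.sum_congr rfl fun i _ => ?_
        rw [hrw i, Finset.mul_sum]

lemma card_light {L k : ℕ} (hk : 2 ≤ k) (hkL : k ≤ L) :
    (univ.filter (fun i : Fin L => ((i : ℕ) < k - 1))).card = k - 1 := by
  have hlt : k - 1 < L := by omega
  have heq : univ.filter (fun i : Fin L => (i : ℕ) < k - 1) = Finset.Iio (⟨k - 1, hlt⟩ : Fin L) := by
    ext x; simp [Finset.mem_Iio, Fin.lt_def]
  rw [heq, Fin.card_Iio]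

lemma catCost_ge {L k : ℕ} (hk : 2 ≤ k) (hkL : k ≤ L) (v : Fin L → ℝ) (hpos : ∀ i, 0 < v i)
    (hmono : ∀ i j : Fin L, i ≤ j → v j ≤ v i)
    (C : Finset (EuclideanSpace ℝ (Fin L))) (hC : C.Nonempty) (hCk : C.card ≤ k) :
    fcost v (univ.filter (fun i : Fin L => k - 1 ≤ (i : ℕ))) ≤ catCost L v C := by
  classical
  set T := univ.filter (fun i : Fin L => k - 1 ≤ (i : ℕ)) with hT
  have hmin : ∀ i : Fin L, ∃ x ∈ C, ∀ y ∈ C,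
      ‖EuclideanSpace.single i (1:ℝ) - x‖ ≤ ‖EuclideanSpace.single i (1:ℝ) - y‖ :=
    fun i => C.exists_min_image _ hC
  choose c hcC hcmin using hmin
  have hsInf : ∀ i : Fin L, sInf ((fun x => ‖EuclideanSpace.single i (1:ℝ) - x‖) ''
      (C : Set (EuclideanSpace ℝ (Fin L)))) = ‖EuclideanSpace.single i (1:ℝ) - c i‖ := by
    intro i
    apply le_antisymm
    · exact csInf_le ⟨0, by rintro _ ⟨y, hy, rfl⟩; exact norm_nonneg _⟩ ⟨c i, hcC i, rfl⟩
    · obtain ⟨x0, hx0⟩ := hC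
      refine le_csInf ⟨_, ⟨x0, hx0, rfl⟩⟩ ?_
      rintro _ ⟨y, hy, rfl⟩
      exact hcmin i y hy
  have hcost : catCost L v C = ∑ i, v i * ‖EuclideanSpace.single i (1:ℝ) - c i‖ ^ 2 := by
    unfold catCost
    exact Finset.sum_congr rfl fun i _ => by rw [hsInf i]
  have hfw : ∑ i : Fin L, v i * ‖EuclideanSpace.single i (1:ℝ) - c i‖ ^ 2
      = ∑ x ∈ C, ∑ i ∈ univ.filter (fun i => c i = x),
          v i * ‖EuclideanSpace.single i (1:ℝ) - c i‖ ^ 2 :=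
    (Finset.sum_fiberwise_of_maps_to (fun i _ => hcC i) _).symm
  have hbound : ∀ x ∈ C, fcost v (univ.filter fun i => c i = x)
      ≤ ∑ i ∈ univ.filter (fun i => c i = x), v i * ‖EuclideanSpace.single i (1:ℝ) - c i‖ ^ 2 := by
    intro x hx
    have heq : ∑ i ∈ univ.filter (fun i => c i = x), v i * ‖EuclideanSpace.single i (1:ℝ) - c i‖ ^ 2
        = ∑ i ∈ univ.filter (fun i => c i = x), v i * ‖EuclideanSpace.single i (1:ℝ) - x‖ ^ 2 :=
      Finset.sum_congr rfl fun i hi => by rw [(Finset.mem_filter.mp hi).2]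
    rw [heq]
    exact cluster_lb v hpos _ x
  have hcard : ((univ : Finset (Fin L)) \ T).card + 1 = k := by
    have h1 : (univ : Finset (Fin L)) \ T = univ.filter (fun i : Fin L => (i : ℕ) < k - 1) := by
      rw [hT, ← Finset.filter_not]
      exact Finset.filter_congr fun i _ => not_le
    rw [h1, card_light hk hkL]
    omega
  have hheavy : ∀ i ∈ (univ : Finset (Fin L)) \ T, ∀ j ∈ T, v j ≤ v i := by
    intro i hi j hj
    have hi' : ¬ (k - 1 ≤ (i : ℕ)) := by
      rw [Finset.mem_sdiff, hT] at hi
      simpa using hi.2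
    have hj' : k - 1 ≤ (j : ℕ) := by
      rw [hT, Finset.mem_filter] at hj
      exact hj.2
    exact hmono i j (by omega)
  have hkey := key_partition k univ T v C c (fun i _ => hpos i) (Finset.filter_subset _ _)
    hcard hheavy hCk (fun i _ => hcC i)
  rw [hcost, hfw]
  exact hkey.trans (Finset.sum_le_sum hbound)

lemma esnorm_sq {L : ℕ} (y : EuclideanSpace ℝ (Fin L)) : ‖y‖ ^ 2 = ∑ t, y t ^ 2 := by
  rw [EuclideanSpace.norm_eq, Real.sq_sqrt (by positivity)]
  simp [sq_abs]

lemma catCost_Cstar {L k : ℕ} (hL : 2 ≤ L) (hk : 2 ≤ k) (hkL : k ≤ L)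
    (v : Fin L → ℝ) (hpos : ∀ i, 0 < v i) :
    catCost L v (Cstar L k v) = fcost v (univ.filter (fun i : Fin L => k - 1 ≤ (i : ℕ))) := by
  classical
  set T := univ.filter (fun i : Fin L => k - 1 ≤ (i : ℕ)) with hT
  set V := ∑ i ∈ T, v i with hV
  set A := ∑ i ∈ T, v i ^ 2 with hA
  have hTne : T.Nonempty := by
    refine ⟨⟨L - 1, by omega⟩, ?_⟩
    rw [hT, Finset.mem_filter]
    exact ⟨Finset.mem_univ _, by simp; omega⟩
  have hVpos : 0 < V := Finset.sum_pos (fun i _ => hpos i) hTne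
  have hAV : A ≤ V ^ 2 := sum_sq_le v T (fun i _ => (hpos i).le)
  have hApos : 0 < A := Finset.sum_pos (fun i _ => pow_pos (hpos i) 2) hTne
  set μ := lightCentroid L k v with hμdef
  have hμ : ∀ t : Fin L, μ t = if k - 1 ≤ (t : ℕ) then v t / V else 0 := by
    intro t
    rw [hμdef, lightCentroid,
      show ((∑ i ∈ T, (v i / V) • EuclideanSpace.single i (1:ℝ)) t)
        = ∑ i ∈ T, ((v i / V) • EuclideanSpace.single i (1:ℝ)) t from by rw [WithLp.ofLp_sum, Finset.sum_apply]]
    simp only [PiLp.smul_apply, EuclideanSpace.single_apply, smul_eq_mul]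
    rw [Finset.sum_congr rfl (fun i _ => by rw [mul_ite, mul_one, mul_zero]),
      Finset.sum_ite_eq T t (fun i => v i / V)]
    rw [hT]
    simp
  have hμsq : ∑ t : Fin L, μ t ^ 2 = A / V ^ 2 := by
    have : ∀ t : Fin L, μ t ^ 2 = if t ∈ T then v t ^ 2 / V ^ 2 else 0 := by
      intro t
      rw [hμ t]
      by_cases h : t ∈ T
      · have h' : k - 1 ≤ (t : ℕ) := (Finset.mem_filter.mp h).2
        simp [h, h', div_pow]
      · have h' : ¬ (k - 1 ≤ (t : ℕ)) := fun hc => h (Finset.mem_filter.mpr ⟨Finset.mem_univ _, hc⟩)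
        simp [h, h']
    rw [Finset.sum_congr rfl fun t _ => this t]
    rw [Finset.sum_ite_mem, Finset.univ_inter, ← Finset.sum_div, hA]
  have hdistμ : ∀ i : Fin L, k - 1 ≤ (i : ℕ) →
      ‖EuclideanSpace.single i (1:ℝ) - μ‖ ^ 2 = 1 - 2 * v i / V + A / V ^ 2 := by
    intro i hi
    rw [esnorm_sq]
    have hsub : ∀ t : Fin L, (EuclideanSpace.single i (1:ℝ) - μ) t
        = (if t = i then (1:ℝ) else 0) - μ t := by
      intro t
      have : (EuclideanSpace.single i (1:ℝ) - μ) t = EuclideanSpace.single i (1:ℝ) t - μ t := rfl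
      rw [this, EuclideanSpace.single_apply]
    have hterm : ∀ t : Fin L, ((EuclideanSpace.single i (1:ℝ) - μ) t) ^ 2
        = (if t = i then 1 - 2 * μ t else 0) + μ t ^ 2 := by
      intro t
      rw [hsub t]
      by_cases h : t = i
      · simp [h]; ring
      · simp [h]
    rw [Finset.sum_congr rfl fun t _ => hterm t, Finset.sum_add_distrib,
      Finset.sum_ite_eq' univ i (fun t => 1 - 2 * μ t), hμsq]
    have := hμ i
    rw [if_pos hi] at this
    simp [this]
    ring
  have hdist2 : ∀ i j : Fin L, i ≠ j →
      ‖EuclideanSpace.single i (1:ℝ) - EuclideanSpace.single j (1:ℝ)‖ ^ 2 = 2 := by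
    intro i j hij
    rw [esnorm_sq]
    have hterm : ∀ t : Fin L, ((EuclideanSpace.single i (1:ℝ) - EuclideanSpace.single j (1:ℝ)) t) ^ 2
        = (if t = i then (1:ℝ) else 0) + (if t = j then (1:ℝ) else 0) := by
      intro t
      have h0 : (EuclideanSpace.single i (1:ℝ) - EuclideanSpace.single j (1:ℝ)) t
          = EuclideanSpace.single i (1:ℝ) t - EuclideanSpace.single j (1:ℝ) t := rfl
      rw [h0, EuclideanSpace.single_apply, EuclideanSpace.single_apply]
      by_cases h1 : t = i
      · have h2 : t ≠ j := fun hc => hij (h1 ▸ hc ▸ rfl)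
        subst h1
        simp [h2, if_neg (by exact hij)]
      · by_cases h2 : t = j
        · subst h2; simp [if_neg (Ne.symm hij)]
        · simp [h1, h2]
    rw [Finset.sum_congr rfl fun t _ => hterm t, Finset.sum_add_distrib,
      Finset.sum_ite_eq' univ i (fun _ => (1:ℝ)), Finset.sum_ite_eq' univ j (fun _ => (1:ℝ))]
    norm_num
  -- membership facts
  have hμmem : μ ∈ Cstar L k v := Finset.mem_union_right _ (Finset.mem_singleton_self _)
  have hsingmem : ∀ j : Fin L, (j : ℕ) < k - 1 → EuclideanSpace.single j (1:ℝ) ∈ Cstar L k v := by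
    intro j hj
    exact Finset.mem_union_left _ (Finset.mem_image_of_mem _
      (Finset.mem_filter.mpr ⟨Finset.mem_univ _, hj⟩))
  have hbdd : ∀ i : Fin L, BddBelow ((fun x => ‖EuclideanSpace.single i (1:ℝ) - x‖) ''
      ((Cstar L k v : Set (EuclideanSpace ℝ (Fin L))))) := by
    intro i
    exact ⟨0, by rintro _ ⟨y, hy, rfl⟩; exact norm_nonneg _⟩
  have hsinf0 : ∀ i : Fin L, (i : ℕ) < k - 1 →
      sInf ((fun x => ‖EuclideanSpace.single i (1:ℝ) - x‖) ''
        (Cstar L k v : Set (EuclideanSpace ℝ (Fin L)))) = 0 := by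
    intro i hi
    apply le_antisymm
    · exact csInf_le (hbdd i) ⟨EuclideanSpace.single i 1,
        Finset.mem_coe.mpr (hsingmem i hi), by simp⟩
    · refine le_csInf ⟨_, ⟨μ, Finset.mem_coe.mpr hμmem, rfl⟩⟩ ?_
      rintro _ ⟨y, hy, rfl⟩
      exact norm_nonneg _
  have hsinfμ : ∀ i : Fin L, k - 1 ≤ (i : ℕ) →
      sInf ((fun x => ‖EuclideanSpace.single i (1:ℝ) - x‖) ''
        (Cstar L k v : Set (EuclideanSpace ℝ (Fin L)))) = ‖EuclideanSpace.single i (1:ℝ) - μ‖ := by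
    intro i hi
    apply le_antisymm
    · exact csInf_le (hbdd i) ⟨μ, Finset.mem_coe.mpr hμmem, rfl⟩
    · refine le_csInf ⟨_, ⟨μ, Finset.mem_coe.mpr hμmem, rfl⟩⟩ ?_
      rintro _ ⟨y, hy, rfl⟩
      rw [Finset.mem_coe, Cstar, Finset.mem_union] at hy
      rcases hy with hy | hy
      · obtain ⟨j, hj, rfl⟩ := Finset.mem_image.mp hy
        have hjk : (j : ℕ) < k - 1 := (Finset.mem_filter.mp hj).2
        have hji : i ≠ j := fun h => by rw [h] at hi; omega
        have hsq : ‖EuclideanSpace.single i (1:ℝ) - μ‖ ^ 2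
            ≤ ‖EuclideanSpace.single i (1:ℝ) - EuclideanSpace.single j (1:ℝ)‖ ^ 2 := by
          rw [hdistμ i hi, hdist2 i j hji]
          have h1 : A / V ^ 2 ≤ 1 := by
            rw [div_le_one (pow_pos hVpos 2)]; exact hAV
          have h3 : 0 < 2 * v i / V := div_pos (mul_pos two_pos (hpos i)) hVpos
          linarith
        exact (abs_le_of_sq_le_sq' hsq (norm_nonneg _)).2
      · rw [Finset.mem_singleton] at hy
        subst hy
        exact le_refl _
  -- final computation
  rw [catCost, ← Finset.sum_filter_add_sum_filter_not univ (fun i : Fin L => k - 1 ≤ (i : ℕ))]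
  have hz : ∑ i ∈ univ.filter (fun i : Fin L => ¬ (k - 1 ≤ (i : ℕ))),
      v i * (sInf ((fun x => ‖EuclideanSpace.single i (1:ℝ) - x‖) ''
        (Cstar L k v : Set (EuclideanSpace ℝ (Fin L))))) ^ 2 = 0 := by
    refine Finset.sum_eq_zero fun i hi => ?_
    have : (i : ℕ) < k - 1 := by
      have := (Finset.mem_filter.mp hi).2
      omega
    rw [hsinf0 i this]
    ring
  have hm : ∑ i ∈ T, v i * (sInf ((fun x => ‖EuclideanSpace.single i (1:ℝ) - x‖) ''
        (Cstar L k v : Set (EuclideanSpace ℝ (Fin L))))) ^ 2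
      = ∑ i ∈ T, v i * (1 - 2 * v i / V + A / V ^ 2) := by
    refine Finset.sum_congr rfl fun i hi => ?_
    have hik : k - 1 ≤ (i : ℕ) := (Finset.mem_filter.mp hi).2
    rw [hsinfμ i hik, hdistμ i hik]
  have halg : ∑ i ∈ T, v i * (1 - 2 * v i / V + A / V ^ 2) = V - A / V := by
    have e1 : ∑ i ∈ T, v i * (1 - 2 * v i / V + A / V ^ 2)
        = (∑ i ∈ T, v i) - (2 / V) * (∑ i ∈ T, v i ^ 2) + (A / V ^ 2) * (∑ i ∈ T, v i) := by
      rw [Finset.mul_sum, Finset.mul_sum, ← Finset.sum_sub_distrib, ← Finset.sum_add_distrib]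
      exact Finset.sum_congr rfl fun i _ => by ring
    rw [e1, ← hV, ← hA]
    field_simp
    ring
  rw [← hT, hz, hm, halg, add_zero, fcost, ← hV, ← hA]


/-- for the categorical weighted k-means instance with
`v₁ ≥ ⋯ ≥ v_L > 0` and `2 ≤ k ≤ L`, the set `C* = {1₁, …, 1_{k−1}, μ}` is optimal:
its cost equals `OPT_k(I, v)`, the minimum cost over all nonempty centroid sets of size
at most `k`. -/
theorem statement16 (L k : ℕ) (hL : 2 ≤ L) (hk : 2 ≤ k) (hkL : k ≤ L)
    (v : Fin L → ℝ) (hpos : ∀ i, 0 < v i) (hmono : ∀ i j : Fin L, i ≤ j → v j ≤ v i) :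
    catCost L v (Cstar L k v)
      = sInf {c : ℝ | ∃ C : Finset (EuclideanSpace ℝ (Fin L)),
          C.Nonempty ∧ C.card ≤ k ∧ catCost L v C = c} := by
  classical
  have hCstar_ne : (Cstar L k v).Nonempty :=
    ⟨lightCentroid L k v, Finset.mem_union_right _ (Finset.mem_singleton_self _)⟩
  have hCstar_card : (Cstar L k v).card ≤ k := by
    refine (Finset.card_union_le _ _).trans ?_
    have h1 : ((univ.filter (fun i : Fin L => (i : ℕ) < k - 1)).image
        (fun i => EuclideanSpace.single i (1:ℝ))).card ≤ k - 1 :=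
      (Finset.card_image_le).trans_eq (card_light hk hkL)
    have h2 : ({lightCentroid L k v} : Finset (EuclideanSpace ℝ (Fin L))).card = 1 :=
      Finset.card_singleton _
    omega
  have hmem : catCost L v (Cstar L k v) ∈ {c : ℝ | ∃ C : Finset (EuclideanSpace ℝ (Fin L)),
      C.Nonempty ∧ C.card ≤ k ∧ catCost L v C = c} := ⟨Cstar L k v, hCstar_ne, hCstar_card, rfl⟩
  apply le_antisymm
  · refine le_csInf ⟨_, hmem⟩ ?_
    rintro c ⟨C, hCne, hCk, rfl⟩
    rw [catCost_Cstar hL hk hkL v hpos]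
    exact catCost_ge hk hkL v hpos hmono C hCne hCk
  · refine csInf_le ⟨0, ?_⟩ hmem
    rintro c ⟨C, hCne, hCk, rfl⟩
    rw [catCost]
    exact Finset.sum_nonneg fun i _ => mul_nonneg (hpos i).le (sq_nonneg _)

end
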